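/- Let V be a vector bundle of rank r on a smooth projective variety X with K_X numerically trivial, and π : P(V) → X the projection. Then −K_{P(V)} is nef if and only if η_C*(V|_C) is semistable for every irreducible curve C ⊆ X, where η_C is the normalization of C. -/

import Mathlib

/-- Theorem 4.12, second part.  If `K_X ≡ 0`, then `−K_{P(V)}` is nef
iff `η_C*(V|_C)` is semistable for every irreducible curve `C ⊆ X`.
Abstract model: `Curve` indexes the irreducible curves of `X`;
`μmin C = μ_min(η_C*(V|_C))`, `KX C = K_X·C = 0` (numerical triviality of `K_X`),
`detV C = det(V)·C = deg(η_C*(V|_C)) ≥ r·μ_min(η_C*(V|_C))`, and a bundle on a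
smooth curve is semistable iff its minimal slope equals its slope `deg / rank`.
`Nef y₀ γ` records nefness of `y₀ξ + π*γ` on `P(V)`, characterized by `y₀ ≥ 0` and
`y₀·μmin C + γ·C ≥ 0` for all curves; `−K_{P(V)} = rξ + π*(−K_X − det V)`. -/
theorem anticanonical_nef_iff_semistable_restrictions
    (Curve : Type) (r : ℕ) (hr : 1 ≤ r)
    (μmin KX detV : Curve → ℝ)
    (h_KX : ∀ C, KX C = 0)                        -- K_X numerically trivial
    (h_deg : ∀ C, (r : ℝ) * μmin C ≤ detV C)
    (Semistable : Curve → Prop)                   -- semistability of η_C*(V|_C)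
    (h_ss : ∀ C, Semistable C ↔ μmin C = detV C / r)
    (Nef : ℝ → (Curve → ℝ) → Prop)
    (h_crit : ∀ y₀ γ, Nef y₀ γ ↔ (0 ≤ y₀ ∧ ∀ C, 0 ≤ y₀ * μmin C + γ C)) :
    Nef r (fun C => -KX C - detV C) ↔ ∀ C, Semistable C := by
  have hr' : (0:ℝ) < r := by exact_mod_cast hr
  rw [h_crit]
  constructor
  · rintro ⟨-, h⟩ C
    rw [h_ss]
    have := h C
    rw [h_KX C] at this
    have : detV C ≤ (r:ℝ) * μmin C := by linarith
    field_simp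
    linarith [h_deg C]
  · intro h
    refine ⟨hr'.le, fun C => ?_⟩
    have := (h_ss C).mp (h C)
    rw [h_KX C, this]
    field_simp
    linarith
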